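/- For every c ≥ 1 and every length n, if a binary string x of length n satisfies K_U(x) ≥ n - c for a fixed universal machine U (i.e., x is c-incompressible), then the number of 0s in x, N_0(x), satisfies |N_0(x)/n - 1/2| = O(sqrt((c + log n)/n)); in particular, the fraction of strings of length n whose number of zeros deviates from n/2 by more than n^(2/3) and which are c-incompressible tends to 0 as n → ∞, because all strings with such deviation are compressible: any string x of length n with |N_0(x) - n/2| > n^(2/3) satisfies K_U(x) ≤ n - Ω(n^(1/3)) + O(log n). -/

import Mathlib

/-- Kolmogorov complexity of `x` relative to the machine (partial function) `M`. -/
noncomputable def KC (M : List Bool →. List Bool) (x : List Bool) : ℕ∞ :=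
  sInf ((fun s : List Bool => (s.length : ℕ∞)) '' {s | x ∈ M s})

namespace S19
open Primrec

/-- little-endian bits of a natural number -/
def toB : ℕ → List Bool
  | 0 => []
  | (n+1) => (((n+1) % 2) == 1) :: toB ((n+1) / 2)
decreasing_by exact Nat.div_lt_self (Nat.succ_pos n) one_lt_two

def ofB : List Bool → ℕ := fun l => l.foldr (fun b m => 2 * m + cond b 1 0) 0

lemma ofB_toB : ∀ m, ofB (toB m) = m := by
  intro m
  induction m using Nat.strong_induction_on with
  | _ m ih =>
    match m with
    | 0 => simp [toB, ofB]
    | (n+1) =>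
      rw [toB]
      have h2 : (n+1)/2 < n+1 := Nat.div_lt_self (Nat.succ_pos n) one_lt_two
      have := ih _ h2
      simp only [ofB, List.foldr_cons] at *
      rw [this]
      rcases Nat.mod_two_eq_zero_or_one (n+1) with h | h <;> simp [h] <;> omega

lemma toB_len_le : ∀ m k, m < 2^k → (toB m).length ≤ k := by
  intro m
  induction m using Nat.strong_induction_on with
  | _ m ih =>
    intro k hk
    match m with
    | 0 => simp [toB]
    | (n+1) =>
      have hk1 : 1 ≤ k := by
        by_contra h
        interval_cases k <;> omega
      rw [toB]
      have h2 : (n+1)/2 < n+1 := Nat.div_lt_self (Nat.succ_pos n) one_lt_two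
      have hlt : (n+1)/2 < 2^(k-1) := by
        have : 2^(k-1)*2 = 2^k := by
          rw [← pow_succ]; congr 1; omega
        rw [Nat.div_lt_iff_lt_mul (by norm_num)]
        omega
      have := ih _ h2 _ hlt
      simp only [List.length_cons]
      omega

lemma toB_lt : ∀ m, m < 2^(toB m).length := by
  intro m
  induction m using Nat.strong_induction_on with
  | _ m ih =>
    match m with
    | 0 => simp [toB]
    | (n+1) =>
      rw [toB]
      have h2 : (n+1)/2 < n+1 := Nat.div_lt_self (Nat.succ_pos n) one_lt_two
      have := ih _ h2
      simp only [List.length_cons, pow_succ]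
      omega

lemma toB_pow_le : ∀ m, 1 ≤ m → 2^(toB m).length ≤ 2 * m := by
  intro m
  induction m using Nat.strong_induction_on with
  | _ m ih =>
    intro hm
    match m with
    | (n+1) =>
      rw [toB]
      simp only [List.length_cons, pow_succ]
      rcases Nat.eq_zero_or_pos ((n+1)/2) with h | h
      · have : n = 0 := by omega
        subst this
        simp [h, toB]
      · have h2 : (n+1)/2 < n+1 := Nat.div_lt_self (Nat.succ_pos n) one_lt_two
        have := ih _ h2 h
        have : 2*((n+1)/2) ≤ n+1 := Nat.mul_div_le _ _ |>.trans (le_refl _) |>.trans_eq rfl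
        have := ih _ h2 h
        omega

lemma toB_len_mono {m m' : ℕ} (h : m ≤ m') : (toB m).length ≤ (toB m').length :=
  toB_len_le _ _ (lt_of_le_of_lt h (toB_lt m'))

abbrev St := ℕ × Option Bool × ℕ × ℕ × ℕ

def step (s : St) (b : Bool) : St :=
  if s.1 ≤ 1 then
    if s.2.1.isSome then
      (if s.2.1.getD false = b then
        (s.1, none, (if s.1 = 0 then 2*s.2.2.1 + cond b 1 0 else s.2.2.1),
          (if s.1 = 1 then 2*s.2.2.2.1 + cond b 1 0 else s.2.2.2.1), s.2.2.2.2)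
      else (s.1+1, none, s.2.2.1, s.2.2.2.1, s.2.2.2.2))
    else (s.1, some b, s.2.2.1, s.2.2.2.1, s.2.2.2.2)
  else (s.1, s.2.1, s.2.2.1, s.2.2.2.1, 2*s.2.2.2.2 + cond b 1 0)

def pushB (a : ℕ) (l : List Bool) : ℕ := l.foldl (fun m b => 2 * m + cond b 1 0) a

def dbl (l : List Bool) : List Bool := l.flatMap (fun b => [b, b])

def sd (l : List Bool) : List Bool := dbl l ++ [false, true]

lemma foldl_step0 : ∀ (l : List Bool) (n j i : ℕ),
    (dbl l).foldl step (0, none, n, j, i) = (0, none, pushB n l, j, i) := by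
  intro l
  induction l with
  | nil => intro n j i; simp [dbl, pushB]
  | cons b t ih =>
    intro n j i
    show ((b :: b :: dbl t).foldl step (0, none, n, j, i)) = _
    simp only [List.foldl_cons]
    rw [show step (0, none, n, j, i) b = (0, some b, n, j, i) by simp [step]]
    rw [show step (0, some b, n, j, i) b = (0, none, 2*n + cond b 1 0, j, i) by simp [step]]
    rw [ih]
    rfl

lemma foldl_step1 : ∀ (l : List Bool) (n j i : ℕ),
    (dbl l).foldl step (1, none, n, j, i) = (1, none, n, pushB j l, i) := by
  intro l
  induction l with
  | nil => intro n j i; simp [dbl, pushB]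
  | cons b t ih =>
    intro n j i
    show ((b :: b :: dbl t).foldl step (1, none, n, j, i)) = _
    simp only [List.foldl_cons]
    rw [show step (1, none, n, j, i) b = (1, some b, n, j, i) by simp [step]]
    rw [show step (1, some b, n, j, i) b = (1, none, n, 2*j + cond b 1 0, i) by simp [step]]
    rw [ih]
    rfl

lemma foldl_step2 : ∀ (l : List Bool) (p : Option Bool) (n j i : ℕ),
    l.foldl step (2, p, n, j, i) = (2, p, n, j, pushB i l) := by
  intro l
  induction l with
  | nil => intro p n j i; simp [pushB]
  | cons b t ih =>
    intro p n j i
    simp only [List.foldl_cons]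
    rw [show step (2, p, n, j, i) b = (2, p, n, j, 2*i + cond b 1 0) by simp [step]]
    rw [ih]
    rfl

lemma end_step0 (n j i : ℕ) : [false, true].foldl step (0, none, n, j, i) = (1, none, n, j, i) := by
  simp [step]

lemma end_step1 (n j i : ℕ) : [false, true].foldl step (1, none, n, j, i) = (2, none, n, j, i) := by
  simp [step]

/-- counting `false`s via foldl -/
def cf (l : List Bool) : ℕ := l.foldl (fun m b => m + cond b 0 1) 0

lemma cf_aux : ∀ (l : List Bool) (m : ℕ), l.foldl (fun m b => m + cond b 0 1) m = m + l.count false := by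
  intro l
  induction l with
  | nil => simp
  | cons b t ih =>
    intro m
    simp only [List.foldl_cons, ih, List.count_cons]
    cases b <;> simp <;> omega

lemma cf_eq (l : List Bool) : cf l = l.count false := by simp [cf, cf_aux]

def allB : ℕ → List (List Bool) :=
  fun n => Nat.rec [[]] (fun _ ih => ih.flatMap (fun l => [false :: l, true :: l])) n

lemma mem_allB : ∀ (n : ℕ) (l : List Bool), l ∈ allB n ↔ l.length = n := by
  intro n
  induction n with
  | zero =>
    intro l
    constructor
    · intro h; simp [allB] at h; simp [h]
    · intro h; rw [List.length_eq_zero_iff] at h; simp [allB, h]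
  | succ n ih =>
    intro l
    show l ∈ (allB n).flatMap _ ↔ _
    rw [List.mem_flatMap]
    constructor
    · rintro ⟨a, ha, hm⟩
      have := (ih a).mp ha
      simp at hm
      rcases hm with h | h <;> subst h <;> simp [this]
    · intro hl
      match l with
      | [] => simp at hl
      | b :: t =>
        refine ⟨t, (ih t).mpr (by simpa using hl), ?_⟩
        cases b <;> simp

def strNJ (n j : ℕ) : List (List Bool) :=
  (allB n).filterMap (fun l => if cf l = j then some l else none)

lemma mem_strNJ {n j : ℕ} {l : List Bool} :
    l ∈ strNJ n j ↔ l.length = n ∧ l.count false = j := by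
  simp only [strNJ, List.mem_filterMap]
  constructor
  · rintro ⟨a, ha, h⟩
    split at h
    · cases h; exact ⟨(mem_allB n l).mp ha, by rwa [cf_eq] at *⟩
    · simp at h
  · rintro ⟨h1, h2⟩
    exact ⟨l, (mem_allB n l).mpr h1, by simp [cf_eq, h2]⟩

lemma sum_map_add (L : List (List Bool)) (f g : List Bool → ℕ) :
    (L.map (fun x => f x + g x)).sum = (L.map f).sum + (L.map g).sum := by
  induction L with
  | nil => simp
  | cons a t ih => simp [ih]; ring

lemma len_filterMap (j : ℕ) (L : List (List Bool)) :
    (L.filterMap (fun l => if cf l = j then some l else none)).length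
      = (L.map (fun l => if cf l = j then 1 else 0)).sum := by
  induction L with
  | nil => simp
  | cons a t ih =>
    by_cases h : cf a = j <;> simp [List.filterMap_cons, h, ih] <;> omega

lemma sum_ind : ∀ (n j : ℕ), ((allB n).map (fun l => if cf l = j then 1 else 0)).sum = n.choose j := by
  intro n
  induction n with
  | zero =>
    intro j
    cases j <;> simp [allB, cf]
  | succ n ih =>
    intro j
    have key : ∀ L : List (List Bool),
        ((L.flatMap (fun l => [false :: l, true :: l])).map (fun l => if cf l = j then 1 else 0)).sum
        = (L.map (fun l => (if cf (false :: l) = j then 1 else 0) + (if cf (true :: l) = j then 1 else 0))).sum := by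
      intro L
      induction L with
      | nil => simp
      | cons a t iht =>
        simp only [List.flatMap_cons, List.map_append, List.sum_append, List.map_cons, List.sum_cons, iht]
        simp
    show ((allB n).flatMap _ |>.map _).sum = _
    rw [key]
    have hf : ∀ l : List Bool, cf (false :: l) = cf l + 1 := by
      intro l; simp [cf, List.foldl_cons, cf_aux]; omega
    have ht : ∀ l : List Bool, cf (true :: l) = cf l := by
      intro l; simp [cf, List.foldl_cons, cf_aux]
    match j with
    | 0 =>
      have : ∀ l : List Bool, ((if cf (false :: l) = 0 then 1 else 0) + (if cf (true :: l) = 0 then 1 else 0)) = (if cf l = 0 then 1 else 0) := by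
        intro l; rw [hf, ht]; simp
      simp only [this, ih]
      simp
    | (j+1) =>
      have : ∀ l : List Bool, ((if cf (false :: l) = j+1 then 1 else 0) + (if cf (true :: l) = j+1 then 1 else 0)) = ((if cf l = j then 1 else 0) + (if cf l = j+1 then 1 else 0)) := by
        intro l; rw [hf, ht]; simp
      simp only [this]
      rw [sum_map_add, ih, ih, Nat.choose_succ_succ]

lemma length_strNJ (n j : ℕ) : (strNJ n j).length = n.choose j := by
  rw [strNJ, len_filterMap, sum_ind]

def decode (s : List Bool) : List Bool :=
  (strNJ (s.foldl step (0, none, 0, 0, 0)).2.2.1 (s.foldl step (0, none, 0, 0, 0)).2.2.2.1).getD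
    (s.foldl step (0, none, 0, 0, 0)).2.2.2.2 []



def desc (n j i : ℕ) : List Bool :=
  sd (toB n).reverse ++ (sd (toB j).reverse ++ (toB i).reverse)

lemma pushB_rev (a : ℕ) (l : List Bool) :
    pushB a l.reverse = l.foldr (fun b m => 2 * m + cond b 1 0) a := by
  simp [pushB, List.foldl_reverse]

lemma pushB_toB (m : ℕ) : pushB 0 (toB m).reverse = m := by
  rw [pushB_rev]
  have := ofB_toB m
  simpa [ofB] using this

lemma decode_desc (n j i : ℕ) :
    decode (desc n j i) = (strNJ n j).getD i [] := by
  have h : (desc n j i).foldl step (0, none, 0, 0, 0) = (2, none, n, j, pushB 0 (toB i).reverse) := by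
    simp only [desc, sd, List.foldl_append]
    rw [foldl_step0, end_step0, foldl_step1, end_step1, foldl_step2, pushB_toB, pushB_toB]
  rw [decode, h, pushB_toB]

lemma length_desc (n j i : ℕ) :
    (desc n j i).length = 2 * (toB n).length + 2 * (toB j).length + (toB i).length + 4 := by
  have hd : ∀ l : List Bool, (dbl l).length = 2 * l.length := by
    intro l
    induction l with
    | nil => simp [dbl]
    | cons b t ih => simp [dbl] at *; omega
  simp [desc, sd, hd]
  omega

lemma step_primrec : Primrec (fun q : St × Bool => step q.1 q.2) := by
  have pst : Primrec (fun q : St × Bool => q.1.1) := fst.comp fst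
  have pp : Primrec (fun q : St × Bool => q.1.2.1) := fst.comp (snd.comp fst)
  have pn : Primrec (fun q : St × Bool => q.1.2.2.1) := fst.comp <| snd.comp (snd.comp fst)
  have pj : Primrec (fun q : St × Bool => q.1.2.2.2.1) :=
    fst.comp <| snd.comp <| snd.comp (snd.comp fst)
  have pi : Primrec (fun q : St × Bool => q.1.2.2.2.2) :=
    snd.comp <| snd.comp <| snd.comp (snd.comp fst)
  have pb : Primrec (fun q : St × Bool => q.2) := snd
  have hcond : ∀ {f : St × Bool → Bool}, Primrec f →
      Primrec (fun q : St × Bool => cond (f q) 1 0 : St × Bool → ℕ) := by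
    intro f hf
    exact Primrec.cond hf (const 1) (const 0)
  have h2n : Primrec (fun q : St × Bool => 2 * q.1.2.2.1 + cond q.2 1 0) :=
    Primrec.nat_add.comp (Primrec.nat_mul.comp (const 2) pn) (hcond pb)
  have h2j : Primrec (fun q : St × Bool => 2 * q.1.2.2.2.1 + cond q.2 1 0) :=
    Primrec.nat_add.comp (Primrec.nat_mul.comp (const 2) pj) (hcond pb)
  have h2i : Primrec (fun q : St × Bool => 2 * q.1.2.2.2.2 + cond q.2 1 0) :=
    Primrec.nat_add.comp (Primrec.nat_mul.comp (const 2) pi) (hcond pb)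
  have inner1 : Primrec (fun q : St × Bool =>
      ((q.1.1, (none : Option Bool), (if q.1.1 = 0 then 2*q.1.2.2.1 + cond q.2 1 0 else q.1.2.2.1),
        (if q.1.1 = 1 then 2*q.1.2.2.2.1 + cond q.2 1 0 else q.1.2.2.2.1), q.1.2.2.2.2) : St)) := by
    refine pst.pair (Primrec.pair (const none) (Primrec.pair ?_ (Primrec.pair ?_ pi)))
    · exact Primrec.ite (PrimrecRel.comp Primrec.eq pst (const 0)) h2n pn
    · exact Primrec.ite (PrimrecRel.comp Primrec.eq pst (const 1)) h2j pj
  have inner2 : Primrec (fun q : St × Bool =>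
      ((q.1.1 + 1, (none : Option Bool), q.1.2.2.1, q.1.2.2.2.1, q.1.2.2.2.2) : St)) :=
    (Primrec.nat_add.comp pst (const 1)).pair
      ((const none).pair (pn.pair (pj.pair pi)))
  have inner3 : Primrec (fun q : St × Bool =>
      ((q.1.1, some q.2, q.1.2.2.1, q.1.2.2.2.1, q.1.2.2.2.2) : St)) :=
    pst.pair ((option_some.comp pb).pair (pn.pair (pj.pair pi)))
  have inner4 : Primrec (fun q : St × Bool =>
      ((q.1.1, q.1.2.1, q.1.2.2.1, q.1.2.2.2.1, 2*q.1.2.2.2.2 + cond q.2 1 0) : St)) :=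
    pst.pair (pp.pair (pn.pair (pj.pair h2i)))
  unfold step
  refine Primrec.ite (PrimrecRel.comp Primrec.nat_le pst (const 1)) ?_ inner4
  refine Primrec.ite (PrimrecRel.comp Primrec.eq (option_isSome.comp pp) (const true)) ?_ inner3
  · refine Primrec.ite (PrimrecRel.comp Primrec.eq
      ((option_getD.comp pp (const false)) : Primrec _) pb) inner1 inner2
  -- condition forms may mismatch; fallback below

lemma foldl_primrec : Primrec (fun s : List Bool => s.foldl step ((0, none, 0, 0, 0) : St)) := by
  have := Primrec.list_foldl (f := @id (List Bool)) (g := fun _ => ((0, none, 0, 0, 0) : St))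
    (h := fun _ (p : St × Bool) => step p.1 p.2) Primrec.id (const _) (step_primrec.comp snd)
  exact this.of_eq (fun l => rfl)

lemma cf_primrec : Primrec cf := by
  have := Primrec.list_foldl (f := @id (List Bool)) (g := fun _ => (0 : ℕ))
    (h := fun _ (p : ℕ × Bool) => p.1 + cond p.2 0 1) Primrec.id (const _)
    ((Primrec.nat_add.comp (fst.comp snd)
      (Primrec.cond (snd.comp snd) (const 0) (const 1))))
  exact this.of_eq (fun l => rfl)

lemma allB_primrec : Primrec allB := by
  have hF : Primrec₂ (fun (_ : ℕ) (ih : List (List Bool)) =>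
      ih.flatMap (fun l => [false :: l, true :: l])) := by
    refine Primrec.list_flatMap (f := fun p : ℕ × List (List Bool) => p.2)
      (g := fun _ l => [false :: l, true :: l]) snd ?_
    exact list_cons.comp (list_cons.comp (const false) snd)
      (list_cons.comp (list_cons.comp (const true) snd) (const []))
  exact Primrec.nat_rec₁ _ hF

lemma strNJ_primrec : Primrec₂ strNJ := by
  refine Primrec.listFilterMap (f := fun p : ℕ × ℕ => allB p.1)
    (g := fun (p : ℕ × ℕ) (l : List Bool) => if cf l = p.2 then some l else none)
    (allB_primrec.comp fst) ?_
  exact Primrec.ite (PrimrecRel.comp Primrec.eq (cf_primrec.comp snd) (snd.comp fst))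
    (option_some.comp snd) (const none)

lemma decode_primrec : Primrec decode := by
  have h221 : Primrec (fun s : List Bool => (s.foldl step ((0, none, 0, 0, 0) : St)).2.2.1) :=
    fst.comp <| snd.comp <| snd.comp foldl_primrec
  have h2221 : Primrec (fun s : List Bool => (s.foldl step ((0, none, 0, 0, 0) : St)).2.2.2.1) :=
    fst.comp <| snd.comp <| snd.comp <| snd.comp foldl_primrec
  have h2222 : Primrec (fun s : List Bool => (s.foldl step ((0, none, 0, 0, 0) : St)).2.2.2.2) :=
    snd.comp <| snd.comp <| snd.comp <| snd.comp foldl_primrec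
  exact (Primrec.list_getD []).comp (strNJ_primrec.comp h221 h2221) h2222

lemma decode_computable : Computable decode := decode_primrec.to_comp


end S19

namespace S19

/-- the machine -/
def Mach : List Bool →. List Bool := fun s => Part.some (decode s)

lemma Mach_partrec : Partrec Mach := decode_computable

end S19


namespace S19

lemma exists_desc (x : List Bool) :
    ∃ i : ℕ, i < x.length.choose (x.count false) ∧
      decode (desc x.length (x.count false) i) = x := by
  have hm : x ∈ strNJ x.length (x.count false) := mem_strNJ.mpr ⟨rfl, rfl⟩
  obtain ⟨i, hi, hx⟩ := List.mem_iff_getElem.mp hm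
  refine ⟨i, by rwa [length_strNJ] at hi, ?_⟩
  rw [decode_desc, List.getD_eq_getElem _ _ hi, hx]

lemma KC_Mach_le (x : List Bool) :
    ∃ i : ℕ, i < x.length.choose (x.count false) ∧
    KC Mach x ≤ ((2 * (toB x.length).length + 2 * (toB (x.count false)).length
      + (toB i).length + 4 : ℕ) : ℕ∞) := by
  obtain ⟨i, hi, hdec⟩ := exists_desc x
  refine ⟨i, hi, ?_⟩
  have hs : x ∈ Mach (desc x.length (x.count false) i) := by
    rw [Mach, Part.mem_some_iff]; exact hdec.symm
  have hmem : (((desc x.length (x.count false) i).length : ℕ∞))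
      ∈ ((fun s : List Bool => (s.length : ℕ∞)) '' {s | x ∈ Mach s}) :=
    ⟨desc x.length (x.count false) i, hs, rfl⟩
  have h := sInf_le hmem
  rwa [length_desc] at h

section Analysis
open Real Set

noncomputable def Hf : ℝ → ℝ := fun p => Real.log p - Real.log (1-p) - 4*(p-1/2)

lemma Hf_hasDeriv {x : ℝ} (hx : x ∈ Ioo (0:ℝ) 1) :
    HasDerivAt Hf (x⁻¹ + (1-x)⁻¹ - 4) x := by
  obtain ⟨h0, h1⟩ := hx
  have d1 : HasDerivAt Real.log x⁻¹ x := Real.hasDerivAt_log (ne_of_gt h0)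
  have d2 : HasDerivAt (fun y : ℝ => Real.log (1-y)) (-(1-x)⁻¹) x := by
    have : HasDerivAt (fun y : ℝ => 1-y) (-1) x := by
      exact (hasDerivAt_id' x).const_sub 1
    have := (Real.hasDerivAt_log (by linarith : (1:ℝ)-x ≠ 0)).comp x this
    exact this.congr_deriv (by ring)
  have d3 : HasDerivAt (fun y : ℝ => 4*(y-1/2)) 4 x := by
    exact (((hasDerivAt_id' x).sub_const (1/2)).const_mul 4).congr_deriv (by ring)
  have := (d1.sub d2).sub d3
  exact this.congr_deriv (by ring)

lemma Hf_mono : MonotoneOn Hf (Ioo (0:ℝ) 1) := by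
  refine monotoneOn_of_deriv_nonneg (convex_Ioo _ _) ?_ ?_ ?_
  · intro x hx
    exact (Hf_hasDeriv hx).continuousAt.continuousWithinAt
  · intro x hx
    rw [interior_Ioo] at hx
    exact (Hf_hasDeriv hx).differentiableAt.differentiableWithinAt
  · intro x hx
    rw [interior_Ioo] at hx
    rw [(Hf_hasDeriv hx).deriv]
    obtain ⟨h0, h1⟩ := hx
    have hx1 : (0:ℝ) < 1 - x := by linarith
    have key : x⁻¹ + (1-x)⁻¹ - 4 = (2*x-1)^2 / (x*(1-x)) := by
      field_simp
      ring
    rw [key]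
    positivity

lemma Hf_nonneg {x : ℝ} (hx : x ∈ Ico (1/2 : ℝ) 1) : 0 ≤ Hf x := by
  have hhalf : (1/2 : ℝ) ∈ Ioo (0:ℝ) 1 := by norm_num
  have hxm : x ∈ Ioo (0:ℝ) 1 := ⟨by linarith [hx.1], hx.2⟩
  have := Hf_mono hhalf hxm hx.1
  have h0 : Hf (1/2) = 0 := by norm_num [Hf]
  linarith

noncomputable def Gf : ℝ → ℝ := fun p => Real.log 2 - Real.binEntropy p - 2*(p-1/2)^2

lemma Gf_hasDeriv {x : ℝ} (hx : x ∈ Ioo (0:ℝ) 1) : HasDerivAt Gf (Hf x) x := by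
  obtain ⟨h0, h1⟩ := hx
  have d1 : HasDerivAt Real.binEntropy (Real.log (1-x) - Real.log x) x :=
    Real.hasDerivAt_binEntropy (ne_of_gt h0) (by linarith)
  have d2 : HasDerivAt (fun p : ℝ => 2*(p-1/2)^2) (4*(x-1/2)) x := by
    have := (((hasDerivAt_id' x).sub_const (1/2)).pow 2).const_mul (2:ℝ)
    exact this.congr_deriv (by norm_num; ring)
  have := ((hasDerivAt_const x (Real.log 2)).sub d1).sub d2
  exact this.congr_deriv (by unfold Hf; ring)

lemma Gf_nonneg {x : ℝ} (h0 : 0 ≤ x) (h1 : x ≤ 1) : 0 ≤ Gf x := by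
  -- first handle x ∈ [1/2, 1]
  have main : ∀ y : ℝ, y ∈ Ico (1/2 : ℝ) 1 → 0 ≤ Gf y := by
    intro y hy
    have hmono : MonotoneOn Gf (Ico (1/2 : ℝ) 1) := by
      refine monotoneOn_of_deriv_nonneg (convex_Ico _ _) ?_ ?_ ?_
      · apply ContinuousOn.sub
        apply ContinuousOn.sub
        · exact continuousOn_const
        · exact Real.binEntropy_continuous.continuousOn
        · exact (continuous_const.mul ((continuous_id.sub continuous_const).pow 2)).continuousOn
      · intro z hz
        rw [interior_Ico] at hz
        have hz' : z ∈ Ioo (0:ℝ) 1 := ⟨by linarith [hz.1], hz.2⟩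
        exact (Gf_hasDeriv hz').differentiableAt.differentiableWithinAt
      · intro z hz
        rw [interior_Ico] at hz
        have hz' : z ∈ Ioo (0:ℝ) 1 := ⟨by linarith [hz.1], hz.2⟩
        rw [(Gf_hasDeriv hz').deriv]
        exact Hf_nonneg ⟨le_of_lt hz.1, hz.2⟩
    have h2 : Gf (1/2) = 0 := by
      have : Real.binEntropy (1/2) = Real.log 2 := by
        rw [show (1/2 : ℝ) = 2⁻¹ by norm_num, Real.binEntropy_two_inv]
      simp [Gf, this]
    have := hmono (by norm_num : (1/2:ℝ) ∈ Ico (1/2:ℝ) 1) hy hy.1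
    linarith
  rcases le_or_gt 1 x with hx1 | hx1
  · have : x = 1 := le_antisymm h1 hx1
    subst this
    have : Real.binEntropy 1 = 0 := Real.binEntropy_one
    simp [Gf, this]
    nlinarith [Real.log_two_gt_d9]
  rcases le_or_gt (1/2) x with hx2 | hx2
  · exact main x ⟨hx2, hx1⟩
  · have hsym : Gf x = Gf (1-x) := by
      simp only [Gf]
      rw [show Real.binEntropy x = Real.binEntropy (1-x) from (Real.binEntropy_one_sub x).symm]
      ring_nf
    rcases eq_or_lt_of_le h0 with h00 | h00
    · subst h00
      simp [Gf, Real.binEntropy_zero]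
      nlinarith [Real.log_two_gt_d9]
    · rw [hsym]
      exact main (1-x) ⟨by linarith, by linarith⟩

lemma entropy_quad {p : ℝ} (h0 : 0 ≤ p) (h1 : p ≤ 1) :
    Real.binEntropy p ≤ Real.log 2 - 2*(p-1/2)^2 := by
  have := Gf_nonneg h0 h1
  simp only [Gf] at this
  linarith

lemma binom_term (n j : ℕ) (hj : j ≤ n) (p : ℝ) (h0 : 0 ≤ p) (h1 : p ≤ 1) :
    (n.choose j : ℝ) * (p^j * (1-p)^(n-j)) ≤ 1 := by
  have hq : (0:ℝ) ≤ 1 - p := by linarith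
  have hbin := add_pow p (1-p) n
  have hsum : (1:ℝ) = ∑ k ∈ Finset.range (n+1), p ^ k * (1-p) ^ (n-k) * (n.choose k : ℝ) := by
    rw [← hbin]
    norm_num
  have hmem : j ∈ Finset.range (n+1) := Finset.mem_range.mpr (by omega)
  have hterm : p ^ j * (1-p) ^ (n-j) * (n.choose j : ℝ)
      ≤ ∑ k ∈ Finset.range (n+1), p ^ k * (1-p) ^ (n-k) * (n.choose k : ℝ) := by
    apply Finset.single_le_sum (f := fun k => p ^ k * (1-p) ^ (n-k) * (n.choose k : ℝ)) _ hmem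
    intro k _
    positivity
  calc (n.choose j : ℝ) * (p^j * (1-p)^(n-j)) = p ^ j * (1-p) ^ (n-j) * (n.choose j : ℝ) := by ring
  _ ≤ _ := hterm
  _ = 1 := hsum.symm

lemma log_choose (n j : ℕ) (hn : 1 ≤ n) (hj : j ≤ n) :
    Real.log (n.choose j) ≤ n * Real.binEntropy ((j:ℝ)/n) := by
  have hnpos : (0:ℝ) < n := by exact_mod_cast hn
  rcases Nat.eq_zero_or_pos j with h0 | hjpos
  · subst h0
    simp [Real.binEntropy_zero]
  rcases eq_or_lt_of_le hj with hjn | hjn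
  · subst hjn
    have hd : ((j:ℝ))/(j:ℝ) = 1 := div_self (ne_of_gt hnpos)
    simp [Nat.choose_self, hd, Real.binEntropy_one]
  -- now 0 < j < n
  set p : ℝ := (j:ℝ)/n with hp
  have hp0 : 0 < p := by positivity
  have hp1 : p < 1 := by
    rw [hp, div_lt_one hnpos]
    exact_mod_cast hjn
  have hq0 : 0 < 1 - p := by linarith
  have hCpos : (0:ℝ) < (n.choose j : ℝ) := by
    exact_mod_cast Nat.choose_pos hj
  have hterm := binom_term n j hj p (le_of_lt hp0) (le_of_lt hp1)
  have hppow : (0:ℝ) < p^j * (1-p)^(n-j) := by positivity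
  have hlog : Real.log ((n.choose j : ℝ) * (p^j * (1-p)^(n-j))) ≤ 0 := by
    calc Real.log _ ≤ Real.log 1 := Real.log_le_log (by positivity) hterm
    _ = 0 := Real.log_one
  rw [Real.log_mul (ne_of_gt hCpos) (ne_of_gt hppow), Real.log_mul (by positivity) (by positivity),
    Real.log_pow, Real.log_pow] at hlog
  have hnj : ((n - j : ℕ) : ℝ) = (n:ℝ) - j := by
    rw [Nat.cast_sub hj]
  have hent : (n:ℝ) * Real.binEntropy p = -((j:ℝ) * Real.log p) - ((n:ℝ)-j) * Real.log (1-p) := by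
    rw [Real.binEntropy, Real.log_inv, Real.log_inv]
    have : (n:ℝ) * p = j := by
      rw [hp]; field_simp
    have h2 : (n:ℝ) * (1 - p) = (n:ℝ) - j := by
      rw [hp]; field_simp
    linear_combination (-Real.log p) * this + (-Real.log (1-p)) * h2
  rw [hnj] at hlog
  rw [hent]
  linarith [hlog]

lemma logb_choose (n j : ℕ) (hn : 1 ≤ n) (hj : j ≤ n) :
    Real.logb 2 (n.choose j) ≤ (n:ℝ) - (2/Real.log 2) * ((j:ℝ) - n/2)^2 / n := by
  have hnpos : (0:ℝ) < n := by exact_mod_cast hn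
  have hlog2 : (0:ℝ) < Real.log 2 := Real.log_pos (by norm_num)
  have h1 := log_choose n j hn hj
  have hp0 : (0:ℝ) ≤ (j:ℝ)/n := by positivity
  have hp1 : (j:ℝ)/n ≤ 1 := by
    rw [div_le_one hnpos]; exact_mod_cast hj
  have h2 := entropy_quad hp0 hp1
  have h3 : Real.log (n.choose j) ≤ (n:ℝ) * (Real.log 2 - 2*((j:ℝ)/n-1/2)^2) := by
    calc Real.log (n.choose j) ≤ (n:ℝ) * Real.binEntropy ((j:ℝ)/n) := h1
    _ ≤ _ := by
      apply mul_le_mul_of_nonneg_left h2 (le_of_lt hnpos)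
  rw [Real.logb, div_le_iff₀ hlog2]
  have key : ((n:ℝ) - (2/Real.log 2) * ((j:ℝ) - n/2)^2 / n) * Real.log 2
      = (n:ℝ) * (Real.log 2 - 2*((j:ℝ)/n-1/2)^2) := by
    field_simp
  rw [key]
  exact h3

end Analysis


section Master
open Real

lemma B_le_logb (m : ℕ) (hm : 1 ≤ m) : ((toB m).length : ℝ) ≤ Real.logb 2 m + 1 := by
  have h := toB_pow_le m hm
  have hcast : (2:ℝ)^((toB m).length) ≤ 2 * m := by exact_mod_cast h
  have hmpos : (0:ℝ) < m := by exact_mod_cast hm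
  have h1 : ((toB m).length : ℝ) = Real.logb 2 ((2:ℝ)^((toB m).length)) := by
    rw [Real.logb_pow]
    simp
  rw [h1]
  calc Real.logb 2 ((2:ℝ)^((toB m).length)) ≤ Real.logb 2 (2*m) :=
        Real.logb_le_logb_of_le (by norm_num) (by positivity) hcast
  _ = 1 + Real.logb 2 m := by
        rw [Real.logb_mul (by norm_num) (ne_of_gt hmpos)]
        simp
  _ = Real.logb 2 m + 1 := by ring

lemma B_le_logb' {i C : ℕ} (hiC : i < C) : ((toB i).length : ℝ) ≤ Real.logb 2 C + 1 := by
  have hC1 : (1:ℝ) ≤ C := by exact_mod_cast Nat.one_le_iff_ne_zero.mpr (by omega)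
  have hlogC : 0 ≤ Real.logb 2 C := Real.logb_nonneg (by norm_num) hC1
  rcases Nat.eq_zero_or_pos i with h0 | hpos
  · subst h0
    simp [toB]
    linarith
  · calc ((toB i).length : ℝ) ≤ Real.logb 2 i + 1 := B_le_logb i hpos
    _ ≤ Real.logb 2 C + 1 := by
        have : (i:ℝ) ≤ C := by exact_mod_cast le_of_lt hiC
        have hipos : (0:ℝ) < i := by exact_mod_cast hpos
        linarith [Real.logb_le_logb_of_le (by norm_num : (1:ℝ) < 2) hipos this]

end Master

section Final
open Real Filter

variable (U : List Bool →. List Bool)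

lemma master (d : ℕ)
    (hd : ∀ x : List Bool, KC U x ≤ KC Mach x + (d : ℕ∞)) (x : List Bool) (hn : 1 ≤ x.length) :
    ∃ m : ℕ, KC U x ≤ (m : ℕ∞) ∧
      (m:ℝ) ≤ (x.length:ℝ) - (2/Real.log 2) * ((x.count false : ℝ) - x.length/2)^2 / x.length
        + 4*Real.logb 2 x.length + (9 + d) := by
  obtain ⟨i, hi, hKC⟩ := KC_Mach_le x
  refine ⟨2*(toB x.length).length + 2*(toB (x.count false)).length + (toB i).length + 4 + d, ?_, ?_⟩
  · calc KC U x ≤ KC Mach x + (d : ℕ∞) := hd x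
    _ ≤ ((2*(toB x.length).length + 2*(toB (x.count false)).length + (toB i).length + 4 : ℕ) : ℕ∞)
        + (d : ℕ∞) := add_le_add_left hKC _
    _ = _ := by rw [← Nat.cast_add]
  · have hjn : x.count false ≤ x.length := List.count_le_length
    have hBn := B_le_logb x.length hn
    have hBj : ((toB (x.count false)).length : ℝ) ≤ Real.logb 2 x.length + 1 := by
      refine le_trans ?_ hBn
      exact_mod_cast toB_len_mono hjn
    have hBi := B_le_logb' hi
    have hch := logb_choose x.length (x.count false) hn hjn
    push_cast
    linarith

lemma part1 (d : ℕ)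
    (hd : ∀ x : List Bool, KC U x ≤ KC Mach x + (d : ℕ∞)) :
    ∃ C : ℝ, 0 < C ∧ ∀ c : ℕ, 1 ≤ c → ∀ n : ℕ, 1 ≤ n → ∀ x : List Bool,
        x.length = n → ((n - c : ℕ) : ℕ∞) ≤ KC U x →
        |((x.count false : ℝ)) / n - 1 / 2| ≤ C * Real.sqrt ((c + Real.log n) / n) := by
  have hlog2 : (0:ℝ) < Real.log 2 := Real.log_pos (by norm_num)
  set K : ℝ := (10 + d) + 4/Real.log 2 with hK
  have hKpos : 0 < K := by positivity
  set S : ℝ := (Real.log 2/2) * K with hS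
  have hSpos : 0 < S := by positivity
  refine ⟨1 + Real.sqrt S, by positivity, ?_⟩
  intro c hc n hn x hx hKClow
  have hnR : (0:ℝ) < n := by exact_mod_cast hn
  have hjn : x.count false ≤ n := hx ▸ List.count_le_length
  have hlogn : 0 ≤ Real.log n := Real.log_nonneg (by exact_mod_cast hn)
  have hargnn : 0 ≤ ((c:ℝ) + Real.log n) / n := by positivity
  set j : ℕ := x.count false with hj
  have hfrac0 : (0:ℝ) ≤ (j:ℝ)/n := by positivity
  have hfrac1 : (j:ℝ)/n ≤ 1 := by
    rw [div_le_one hnR]; exact_mod_cast hjn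
  rcases le_or_gt n c with hcn | hcn
  · -- trivial case c ≥ n
    have h1 : |((j : ℝ)) / n - 1 / 2| ≤ 1/2 := by
      rw [abs_le]; constructor <;> [linarith; linarith]
    have harg1 : (1:ℝ) ≤ ((c:ℝ) + Real.log n) / n := by
      rw [le_div_iff₀ hnR]
      have : (n:ℝ) ≤ c := by exact_mod_cast hcn
      linarith
    have h2 : (1:ℝ) ≤ Real.sqrt (((c:ℝ) + Real.log n) / n) := by
      rw [show (1:ℝ) = Real.sqrt 1 by simp]
      exact Real.sqrt_le_sqrt harg1
    have h3 : (0:ℝ) ≤ Real.sqrt S := Real.sqrt_nonneg _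
    nlinarith [Real.sqrt_nonneg (((c:ℝ) + Real.log n) / n)]
  · obtain ⟨m, hKCm, hm⟩ := master U d hd x (hx ▸ hn)
    rw [hx] at hm
    -- n - c ≤ m in ℕ
    have hnat : n - c ≤ m := by
      have := le_trans hKClow hKCm
      exact_mod_cast this
    have hreal : (n:ℝ) - c ≤ m := by
      have h1 : ((n - c : ℕ) : ℝ) = (n:ℝ) - c := by
        rw [Nat.cast_sub (le_of_lt hcn)]
      have h2 : ((n - c : ℕ) : ℝ) ≤ m := by exact_mod_cast hnat
      linarith
    set δ : ℝ := (j:ℝ) - n/2 with hδ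
    have hQ : (2/Real.log 2) * δ^2 / n ≤ (c:ℝ) + 4*Real.logb 2 n + (9 + d) := by
      linarith
    have hlogb : Real.logb 2 n = Real.log n / Real.log 2 := rfl
    have hRHS : (c:ℝ) + 4*Real.logb 2 n + (9 + d) ≤ K * ((c:ℝ) + Real.log n) := by
      rw [hlogb]
      have hc1 : (1:ℝ) ≤ c := by exact_mod_cast hc
      have hexp : K * ((c:ℝ) + Real.log n) = ((10:ℝ)+d)*c + (4/Real.log 2)*c
          + ((10:ℝ)+d)*Real.log n + (4/Real.log 2)*Real.log n := by rw [hK]; ring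
      have ha : (0:ℝ) ≤ ((9:ℝ)+d)*(c-1) :=
        mul_nonneg (by positivity) (by linarith)
      have hb : (0:ℝ) ≤ (4/Real.log 2)*c := by positivity
      have hcc : (0:ℝ) ≤ ((10:ℝ)+d)*Real.log n := mul_nonneg (by positivity) hlogn
      have h4 : 4 * (Real.log n / Real.log 2) = (4/Real.log 2) * Real.log n := by ring
      nlinarith [ha, hb, hcc]
    have hδ2 : δ^2/n^2 ≤ S * (((c:ℝ) + Real.log n) / n) := by
      have h1 : (2/Real.log 2) * δ^2 / n ≤ K * ((c:ℝ) + Real.log n) := le_trans hQ hRHS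
      rw [div_le_iff₀ hnR] at h1
      have h1' : δ^2 ≤ (Real.log 2/2) * K * ((c:ℝ)+Real.log n) * n := by
        calc δ^2 = (Real.log 2/2) * ((2/Real.log 2)*δ^2) := by field_simp
        _ ≤ (Real.log 2/2) * (K*((c:ℝ)+Real.log n)*n) :=
            mul_le_mul_of_nonneg_left h1 (by positivity)
        _ = _ := by ring
      rw [div_le_iff₀ (by positivity : (0:ℝ) < (n:ℝ)^2)]
      have heq : S * (((c:ℝ)+Real.log n)/n) * (n:ℝ)^2
          = (Real.log 2/2)*K*((c:ℝ)+Real.log n)*n := by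
        rw [hS]; field_simp
      rw [heq]
      exact h1'
    have hdn : (j:ℝ)/n - 1/2 = δ/n := by rw [hδ]; field_simp
    have hLHS : |((j : ℝ)) / n - 1 / 2| = Real.sqrt (δ^2/n^2) := by
      rw [hdn, show δ^2/(n:ℝ)^2 = (δ/n)^2 from (div_pow δ _ 2).symm, Real.sqrt_sq_eq_abs]
    rw [hLHS]
    calc Real.sqrt (δ^2/n^2) ≤ Real.sqrt (S * (((c:ℝ) + Real.log n) / n)) :=
          Real.sqrt_le_sqrt hδ2
    _ = Real.sqrt S * Real.sqrt (((c:ℝ) + Real.log n) / n) := Real.sqrt_mul (le_of_lt hSpos) _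
    _ ≤ (1 + Real.sqrt S) * Real.sqrt (((c:ℝ) + Real.log n) / n) := by
        apply mul_le_mul_of_nonneg_right _ (Real.sqrt_nonneg _)
        linarith [Real.sqrt_nonneg S]

lemma part3 (d : ℕ)
    (hd : ∀ x : List Bool, KC U x ≤ KC Mach x + (d : ℕ∞)) :
    ∀ n : ℕ, 2 ≤ n → ∀ x : List Bool,
        x.length = n → |((x.count false : ℝ)) - n / 2| > (n : ℝ) ^ ((2 : ℝ) / 3) →
        KC U x ≤ ((⌊(n : ℝ) - 2 * (n : ℝ) ^ ((1 : ℝ) / 3) + ((13 + d)/Real.log 2) * Real.log n⌋₊ : ℕ) : ℕ∞) := by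
  have hlog2 : (0:ℝ) < Real.log 2 := Real.log_pos (by norm_num)
  have hlog2le : Real.log 2 ≤ 1 := by
    nlinarith [Real.log_two_lt_d9]
  intro n hn x hx hdev
  have hn1 : 1 ≤ n := by omega
  have hnR : (0:ℝ) < n := by exact_mod_cast hn1
  obtain ⟨m, hKCm, hm⟩ := master U d hd x (hx ▸ hn1)
  rw [hx] at hm
  set j : ℕ := x.count false with hj
  set δ : ℝ := (j:ℝ) - n/2 with hδ
  have hdev' : (n : ℝ) ^ ((2 : ℝ) / 3) < |δ| := hdev
  have hδ2 : (n:ℝ) ^ ((4:ℝ)/3) < δ^2 := by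
    have h0 : (0:ℝ) ≤ (n : ℝ) ^ ((2 : ℝ) / 3) := Real.rpow_nonneg (le_of_lt hnR) _
    have := mul_self_lt_mul_self h0 hdev'
    calc (n:ℝ) ^ ((4:ℝ)/3) = (n : ℝ) ^ ((2 : ℝ) / 3) * (n : ℝ) ^ ((2 : ℝ) / 3) := by
          rw [← Real.rpow_add hnR]; norm_num
    _ < |δ| * |δ| := this
    _ = δ^2 := by rw [abs_mul_abs_self]; ring
  have hQ : (n:ℝ)^((1:ℝ)/3) < δ^2 / n := by
    rw [lt_div_iff₀ hnR]
    calc (n:ℝ)^((1:ℝ)/3) * n = (n:ℝ)^((4:ℝ)/3) := by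
          have e1 : (n:ℝ)^((1:ℝ)/3) * (n:ℝ) = (n:ℝ)^((1:ℝ)/3) * (n:ℝ)^(1:ℝ) := by
            rw [Real.rpow_one]
          rw [e1, ← Real.rpow_add hnR]; norm_num
    _ < δ^2 := hδ2
  have h2Q : 2 * (n:ℝ)^((1:ℝ)/3) ≤ (2/Real.log 2) * δ^2 / n := by
    have hr : (0:ℝ) ≤ (n:ℝ)^((1:ℝ)/3) := Real.rpow_nonneg (le_of_lt hnR) _
    have h1 : (2:ℝ) ≤ 2/Real.log 2 := by
      rw [le_div_iff₀ hlog2]; linarith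
    have h2 : (2/Real.log 2) * ((n:ℝ)^((1:ℝ)/3)) ≤ (2/Real.log 2) * (δ^2/n) := by
      apply mul_le_mul_of_nonneg_left (le_of_lt hQ) (by positivity)
    calc 2 * (n:ℝ)^((1:ℝ)/3) ≤ (2/Real.log 2) * ((n:ℝ)^((1:ℝ)/3)) := by
          apply mul_le_mul_of_nonneg_right h1 hr
    _ ≤ (2/Real.log 2) * (δ^2/n) := h2
    _ = (2/Real.log 2) * δ^2 / n := by ring
  have hlogn2 : Real.log 2 ≤ Real.log n := by
    apply Real.log_le_log (by norm_num)
    exact_mod_cast hn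
  have hlognn : 0 ≤ Real.log n := le_trans (le_of_lt hlog2) hlogn2
  have htail : 4*Real.logb 2 n + (9 + d) ≤ ((13 + d)/Real.log 2) * Real.log n := by
    have hlogb : Real.logb 2 n = Real.log n / Real.log 2 := rfl
    rw [hlogb]
    have h9 : (9:ℝ) + d ≤ ((9 + d)/Real.log 2) * Real.log n := by
      rw [div_mul_eq_mul_div, le_div_iff₀ hlog2]
      have h1 : (0:ℝ) ≤ 9 + (d:ℝ) := by positivity
      nlinarith
    have h4 : 4 * (Real.log n / Real.log 2) = (4/Real.log 2) * Real.log n := by ring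
    rw [h4]
    have : (4/Real.log 2) * Real.log n + ((9 + d)/Real.log 2) * Real.log n
        = ((13 + d)/Real.log 2) * Real.log n := by
      field_simp
      ring
    linarith
  have hmR : (m:ℝ) ≤ (n : ℝ) - 2 * (n : ℝ) ^ ((1 : ℝ) / 3) + ((13 + d)/Real.log 2) * Real.log n := by
    linarith
  have hfloor : m ≤ ⌊(n : ℝ) - 2 * (n : ℝ) ^ ((1 : ℝ) / 3) + ((13 + d)/Real.log 2) * Real.log n⌋₊ :=
    Nat.le_floor hmR
  exact le_trans hKCm (by exact_mod_cast hfloor)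


lemma part2 (d : ℕ)
    (hd : ∀ x : List Bool, KC U x ≤ KC Mach x + (d : ℕ∞)) :
    ∀ c : ℕ, Filter.Tendsto (fun n : ℕ =>
        (Set.ncard {x : List Bool | x.length = n ∧
            |((x.count false : ℝ)) - n / 2| > (n : ℝ) ^ ((2 : ℝ) / 3) ∧
            ((n - c : ℕ) : ℕ∞) ≤ KC U x} : ℝ) / 2 ^ n) Filter.atTop (nhds 0) := by
  intro c
  set C' : ℝ := ((13:ℝ) + d)/Real.log 2 with hC'
  have hrealev : ∀ᶠ x : ℝ in atTop, (c:ℝ) < 2*x^((1:ℝ)/3) - C'*Real.log x := by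
    have hlo : (fun x:ℝ => C' * Real.log x) =o[atTop] (fun x:ℝ => x^((1:ℝ)/3)) :=
      ((isLittleO_log_rpow_atTop (by norm_num : (0:ℝ) < 1/3)).const_mul_left C')
    have hb := hlo.bound one_pos
    have h3 : Filter.Tendsto (fun x:ℝ => x^((1:ℝ)/3)) atTop atTop :=
      tendsto_rpow_atTop (by norm_num)
    have h4 : ∀ᶠ x:ℝ in atTop, (c:ℝ)+1 ≤ x^((1:ℝ)/3) := h3.eventually_ge_atTop _
    have h5 : ∀ᶠ x:ℝ in atTop, (0:ℝ) ≤ x := eventually_ge_atTop 0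
    filter_upwards [hb, h4, h5] with x hbx h4x h5x
    have h6 : C'*Real.log x ≤ x^((1:ℝ)/3) := by
      have := le_trans (le_abs_self _) hbx
      rwa [one_mul, Real.norm_eq_abs, abs_of_nonneg (Real.rpow_nonneg h5x _)] at this
    linarith
  have hev : ∀ᶠ n : ℕ in atTop, {x : List Bool | x.length = n ∧
      |((x.count false : ℝ)) - n / 2| > (n : ℝ) ^ ((2 : ℝ) / 3) ∧
      ((n - c : ℕ) : ℕ∞) ≤ KC U x} = ∅ := by
    have hnatev := (tendsto_natCast_atTop_atTop (R := ℝ)).eventually hrealev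
    filter_upwards [hnatev, eventually_ge_atTop 2, eventually_ge_atTop (c+1)] with n h1 h2 h3
    ext x
    simp only [Set.mem_setOf_eq, Set.mem_empty_iff_false, iff_false]
    rintro ⟨hlen, hdev, hKClow⟩
    have hKCup := part3 U d hd n h2 x hlen hdev
    set R : ℝ := (n : ℝ) - 2 * (n : ℝ) ^ ((1 : ℝ) / 3) + C' * Real.log n with hR
    have hnat : n - c ≤ ⌊R⌋₊ := by exact_mod_cast le_trans hKClow hKCup
    have hnc : c + 1 ≤ n := h3
    have hRlt : R < (n:ℝ) - c := by
      rw [hR]; linarith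
    rcases le_or_gt 0 R with hR0 | hR0
    · have hfl : (⌊R⌋₊ : ℝ) ≤ R := Nat.floor_le hR0
      have hcast : ((n - c : ℕ) : ℝ) = (n:ℝ) - c := by
        rw [Nat.cast_sub (by omega)]
      have : ((n - c : ℕ) : ℝ) ≤ (⌊R⌋₊ : ℝ) := by exact_mod_cast hnat
      linarith
    · have : ⌊R⌋₊ = 0 := Nat.floor_of_nonpos (le_of_lt hR0)
      rw [this] at hnat
      omega
  have heq : (fun n : ℕ => (0:ℝ)) =ᶠ[atTop] (fun n : ℕ =>
      (Set.ncard {x : List Bool | x.length = n ∧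
        |((x.count false : ℝ)) - n / 2| > (n : ℝ) ^ ((2 : ℝ) / 3) ∧
        ((n - c : ℕ) : ℕ∞) ≤ KC U x} : ℝ) / 2 ^ n) := by
    filter_upwards [hev] with n hn
    rw [hn]
    simp
  exact tendsto_const_nhds.congr' heq

end Final
end S19

theorem stmt19 (U : List Bool →. List Bool) (hU : Partrec U)
    (huniv : ∀ M : List Bool →. List Bool, Partrec M →
      ∃ d : ℕ, ∀ x : List Bool, KC U x ≤ KC M x + (d : ℕ∞)) :
    -- c-incompressible strings have nearly equal numbers of 0s and 1s
    (∃ C : ℝ, 0 < C ∧ ∀ c : ℕ, 1 ≤ c → ∀ n : ℕ, 1 ≤ n → ∀ x : List Bool,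
        x.length = n → ((n - c : ℕ) : ℕ∞) ≤ KC U x →
        |((x.count false : ℝ)) / n - 1 / 2| ≤ C * Real.sqrt ((c + Real.log n) / n)) ∧
    -- the fraction of strings of length `n` with deviation `> n^(2/3)` that are
    -- c-incompressible tends to 0
    (∀ c : ℕ, Filter.Tendsto (fun n : ℕ =>
        (Set.ncard {x : List Bool | x.length = n ∧
            |((x.count false : ℝ)) - n / 2| > (n : ℝ) ^ ((2 : ℝ) / 3) ∧
            ((n - c : ℕ) : ℕ∞) ≤ KC U x} : ℝ) / 2 ^ n) Filter.atTop (nhds 0)) ∧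
    -- strings with deviation `> n^(2/3)` are compressible: K_U(x) ≤ n - Ω(n^(1/3)) + O(log n)
    (∃ c₀ : ℝ, 0 < c₀ ∧ ∃ C' : ℝ, ∃ n₀ : ℕ, ∀ n : ℕ, n₀ ≤ n → ∀ x : List Bool,
        x.length = n → |((x.count false : ℝ)) - n / 2| > (n : ℝ) ^ ((2 : ℝ) / 3) →
        KC U x ≤ ((⌊(n : ℝ) - c₀ * (n : ℝ) ^ ((1 : ℝ) / 3) + C' * Real.log n⌋₊ : ℕ) : ℕ∞)) := by
  obtain ⟨d, hd⟩ := huniv S19.Mach S19.Mach_partrec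
  refine ⟨S19.part1 U d hd, S19.part2 U d hd, 2, by norm_num, ((13:ℝ) + d)/Real.log 2, 2, ?_⟩
  intro n hn x hx hdev
  exact S19.part3 U d hd n hn x hx hdev
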